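/- There is no sequence of widths d(k) with lim_{k→∞} d(k)/(k/log k) = 0 such that for every k there exists a matrix W ∈ R^{k × d(k)} with rows w_1,...,w_k and, for every l ∈ {0,...,2^k−1}, a vector x_l ∈ R^{d(k)} satisfying w_{t1}^T x_l > w_{t0}^T x_l whenever bit t1 of l is 1 and bit t0 of l is 0. Equivalently, for all sufficiently large k, no linear map R^{d(k)} → R^k can realize all 2^k such subset-separation constraints. -/

import Mathlib

open Filter

/-- Sum of range of two-powers. -/
lemma sum_range_two_pow (m : ℕ) : ∑ t ∈ Finset.range m, 2 ^ t = 2 ^ m - 1 := by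
  induction m with
  | zero => simp
  | succ n ih =>
    rw [Finset.sum_range_succ, ih]
    have := Nat.one_le_two_pow (n := n)
    omega

/-- The bits of a sum of distinct two-powers. -/
lemma testBit_sum_two_pow (T : Finset ℕ) (i : ℕ) :
    (∑ t ∈ T, 2 ^ t).testBit i = decide (i ∈ T) := by
  classical
  set A := ∑ t ∈ T.filter (fun t => t < i), 2 ^ t with hAdef
  set T' := T.filter (fun t => ¬ t < i) with hT'def
  have hsplit1 : ∑ t ∈ T, 2 ^ t = A + ∑ t ∈ T', 2 ^ t :=
    (Finset.sum_filter_add_sum_filter_not T (fun t => t < i) _).symm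
  have hsplit2 : ∑ t ∈ T', 2 ^ t
      = (∑ t ∈ T'.filter (fun t => t = i), 2 ^ t)
        + ∑ t ∈ T'.filter (fun t => ¬ t = i), 2 ^ t :=
    (Finset.sum_filter_add_sum_filter_not T' (fun t => t = i) _).symm
  -- the middle part
  have hB : (∑ t ∈ T'.filter (fun t => t = i), 2 ^ t)
      = if i ∈ T then 2 ^ i else 0 := by
    rw [Finset.sum_filter, Finset.sum_ite_eq' T' i (fun t => 2 ^ t)]
    have : i ∈ T' ↔ i ∈ T := by simp [hT'def]
    simp [this]
  -- the high part is divisible by 2^(i+1)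
  obtain ⟨c, hc⟩ : 2 ^ (i + 1) ∣ ∑ t ∈ T'.filter (fun t => ¬ t = i), 2 ^ t := by
    apply Finset.dvd_sum
    intro t ht
    simp only [Finset.mem_filter, hT'def] at ht
    exact pow_dvd_pow 2 (by omega)
  -- the low part is small
  have hAlt : A < 2 ^ i := by
    have hsub : T.filter (fun t => t < i) ⊆ Finset.range i := by
      intro t ht
      simp only [Finset.mem_filter] at ht
      exact Finset.mem_range.mpr ht.2
    have h2 : A ≤ ∑ t ∈ Finset.range i, 2 ^ t :=
      Finset.sum_le_sum_of_subset hsub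
    rw [sum_range_two_pow] at h2
    have h1 := Nat.one_le_two_pow (n := i)
    omega
  set b : ℕ := if i ∈ T then 1 else 0 with hbdef
  have hps : (2 : ℕ) ^ (i + 1) = 2 ^ i * 2 := pow_succ 2 i
  have hn : ∑ t ∈ T, 2 ^ t = 2 ^ i * (2 * c + b) + A := by
    rw [hsplit1, hsplit2, hB, hc, hps]
    by_cases h : i ∈ T <;> simp only [hbdef, h, if_true, if_false] <;> ring
  have hdiv : (∑ t ∈ T, 2 ^ t) / 2 ^ i = 2 * c + b := by
    rw [hn, Nat.mul_add_div (by positivity : 0 < 2 ^ i),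
      Nat.div_eq_of_lt hAlt, add_zero]
  have hb1 : b ≤ 1 := by by_cases h : i ∈ T <;> simp [hbdef, h]
  rw [Nat.testBit_eq_decide_div_mod_eq, hdiv]
  have : (2 * c + b) % 2 = b := by omega
  rw [this]
  by_cases h : i ∈ T <;> simp [hbdef, h]

/-- No width sequence `d k = o(k / log k)` admits, for every `k`, a linear map
`ℝ^{d k} → ℝ^k` (given by the rows `W t`) realizing all `2^k` subset-separation
constraints: for each `l < 2^k` some input `x_l` on which every coordinate whose
bit in `l` is `1` gets a strictly larger logit than every coordinate whose bit is `0`. -/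
theorem no_sublinear_width_separates :
    ¬ ∃ d : ℕ → ℕ,
      Tendsto (fun k : ℕ => (d k : ℝ) / ((k : ℝ) / Real.log k)) atTop (nhds 0) ∧
      ∀ k : ℕ, ∃ W : Fin k → Fin (d k) → ℝ,
        ∀ l < 2 ^ k, ∃ x : Fin (d k) → ℝ,
          ∀ t0 t1 : Fin k, l.testBit t0 = false → l.testBit t1 = true →
            ∑ j, W t0 j * x j < ∑ j, W t1 j * x j := by
  classical
  rintro ⟨d, htend, hsep⟩
  -- Step 1: for every k, k ≤ d k + 1
  have hk : ∀ k : ℕ, k ≤ d k + 1 := by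
    intro k
    by_contra hlt
    push_neg at hlt
    obtain ⟨W, hW⟩ := hsep k
    set v : Fin k → (Fin (d k) → ℝ) × ℝ := fun t => (W t, 1) with hvdef
    have hnli : ¬ LinearIndependent ℝ v := by
      intro h
      have hcard := h.fintype_card_le_finrank
      rw [Fintype.card_fin, Module.finrank_prod, Module.finrank_fin_fun,
        Module.finrank_self] at hcard
      omega
    obtain ⟨g, hgsum, i0, hgi0⟩ := Fintype.not_linearIndependent_iff.mp hnli
    -- components of the dependence
    have hg1 : ∀ j, ∑ t, g t * W t j = 0 := by
      intro j
      have h1 : (∑ t, g t • v t).1 = 0 := by rw [hgsum]; rfl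
      rw [Prod.fst_sum] at h1
      have := congrFun h1 j
      simpa [hvdef] using this
    have hg2 : ∑ t, g t = 0 := by
      have h2 : (∑ t, g t • v t).2 = 0 := by rw [hgsum]; rfl
      rw [Prod.snd_sum] at h2
      simpa [hvdef] using h2
    set S : Finset (Fin k) := Finset.univ.filter (fun t => 0 < g t) with hSdef
    set N : Finset (Fin k) := Finset.univ.filter (fun t => g t < 0) with hNdef
    -- both nonempty
    have hSne : S.Nonempty := by
      rw [Finset.nonempty_iff_ne_empty]
      intro hSe
      have hle : ∀ t ∈ Finset.univ, g t ≤ 0 := by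
        intro t _
        by_contra hc
        push_neg at hc
        have : t ∈ S := by simp [hSdef, hc]
        simp [hSe] at this
      have := (Finset.sum_eq_zero_iff_of_nonpos hle).mp hg2 i0 (Finset.mem_univ i0)
      exact hgi0 this
    have hNne : N.Nonempty := by
      rw [Finset.nonempty_iff_ne_empty]
      intro hNe
      have hle : ∀ t ∈ Finset.univ, 0 ≤ g t := by
        intro t _
        by_contra hc
        push_neg at hc
        have : t ∈ N := by simp [hNdef, hc]
        simp [hNe] at this
      have := (Finset.sum_eq_zero_iff_of_nonneg hle).mp hg2 i0 (Finset.mem_univ i0)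
      exact hgi0 this
    -- the natural number l
    set l : ℕ := ∑ t ∈ S, 2 ^ (t : ℕ) with hldef
    have hlval : l = ∑ t ∈ S.image (Fin.val), 2 ^ t := by
      rw [Finset.sum_image (by intro a _ b _ h; exact Fin.val_injective h)]
    have hltest : ∀ t : Fin k, l.testBit (t : ℕ) = decide (t ∈ S) := by
      intro t
      rw [hlval, testBit_sum_two_pow, decide_eq_decide]
      simp only [Finset.mem_image]
      constructor
      · rintro ⟨a, ha, hav⟩
        rwa [Fin.val_injective hav] at ha
      · intro ht; exact ⟨t, ht, rfl⟩
    have hllt : l < 2 ^ k := by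
      have hsub : S.image (Fin.val) ⊆ Finset.range k := by
        intro t ht
        simp only [Finset.mem_image] at ht
        obtain ⟨a, _, rfl⟩ := ht
        exact Finset.mem_range.mpr a.isLt
      have h2 : ∑ t ∈ S.image (Fin.val), 2 ^ t ≤ ∑ t ∈ Finset.range k, 2 ^ t :=
        Finset.sum_le_sum_of_subset hsub
      rw [sum_range_two_pow] at h2
      rw [hlval]
      have h1 := Nat.one_le_two_pow (n := k)
      omega
    obtain ⟨x, hx⟩ := hW l hllt
    set f : Fin k → ℝ := fun t => ∑ j, W t j * x j with hfdef
    have hcomp : ∀ t0 ∈ N, ∀ t1 ∈ S, f t0 < f t1 := by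
      intro t0 ht0 t1 ht1
      apply hx
      · rw [hltest t0]
        simp only [decide_eq_false_iff_not]
        intro hmem
        simp only [hSdef, Finset.mem_filter] at hmem
        simp only [hNdef, Finset.mem_filter] at ht0
        linarith [hmem.2, ht0.2]
      · rw [hltest t1]; simp [ht1]
    -- ∑ g t * f t = 0
    have hgf : ∑ t, g t * f t = 0 := by
      simp only [hfdef, Finset.mul_sum]
      rw [Finset.sum_comm]
      have : ∀ j, ∑ t, g t * (W t j * x j) = 0 := by
        intro j
        have : ∑ t, g t * (W t j * x j) = (∑ t, g t * W t j) * x j := by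
          rw [Finset.sum_mul]
          exact Finset.sum_congr rfl fun t _ => by ring
        rw [this, hg1 j, zero_mul]
      exact Finset.sum_eq_zero fun j _ => this j
    -- splitting sums over S and N
    have hsplit : ∀ F : Fin k → ℝ, (∀ t, g t = 0 → F t = 0) →
        ∑ t ∈ S, F t + ∑ t ∈ N, F t = ∑ t, F t := by
      intro F hF
      have hS' : ∑ t ∈ Finset.univ.filter (fun t => 0 < g t), F t = ∑ t ∈ S, F t := rfl
      have hN' : ∑ t ∈ Finset.univ.filter (fun t => ¬ 0 < g t), F t = ∑ t ∈ N, F t := by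
        symm
        apply Finset.sum_subset
        · intro t ht
          simp only [hNdef, Finset.mem_filter] at ht ⊢
          exact ⟨ht.1, by linarith [ht.2]⟩
        · intro t ht hnt
          simp only [Finset.mem_filter, not_lt] at ht
          simp only [hNdef, Finset.mem_filter, Finset.mem_univ, true_and, not_lt] at hnt
          exact hF t (le_antisymm ht.2 hnt)
      rw [← Finset.sum_filter_add_sum_filter_not Finset.univ (fun t => 0 < g t) F, hS', hN']
    have hsum_g : ∑ t ∈ S, g t + ∑ t ∈ N, g t = 0 := by
      rw [hsplit (fun t => g t) (fun t ht => ht)]; exact hg2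
    have hsum_gf : ∑ t ∈ S, g t * f t + ∑ t ∈ N, g t * f t = 0 := by
      rw [hsplit (fun t => g t * f t) (fun t ht => by simp [ht])]
      exact hgf
    set p : ℝ := ∑ t ∈ S, g t with hpdef
    have hppos : 0 < p := by
      apply Finset.sum_pos _ hSne
      intro t ht
      simp only [hSdef, Finset.mem_filter] at ht
      exact ht.2
    set A : ℝ := ∑ t ∈ S, g t * f t with hAdef
    set B : ℝ := ∑ t ∈ N, g t * f t with hBdef
    -- the double sum
    set D : ℝ := ∑ t1 ∈ S, ∑ t0 ∈ N, (g t1 * (-g t0)) * (f t1 - f t0) with hDdef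
    have hDpos : 0 < D := by
      apply Finset.sum_pos _ hSne
      intro t1 ht1
      apply Finset.sum_pos _ hNne
      intro t0 ht0
      have h1 : 0 < g t1 := by
        simpa [hSdef] using (Finset.mem_filter.mp ht1).2
      have h0 : g t0 < 0 := by
        simpa [hNdef] using (Finset.mem_filter.mp ht0).2
      have hf : f t0 < f t1 := hcomp t0 ht0 t1 ht1
      have := mul_pos (mul_pos h1 (by linarith : (0:ℝ) < -g t0)) (by linarith : (0:ℝ) < f t1 - f t0)
      exact this
    have hDzero : D = 0 := by
      have h1 : D = (∑ t0 ∈ N, -g t0) * (∑ t1 ∈ S, g t1 * f t1)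
          - (∑ t1 ∈ S, g t1) * (∑ t0 ∈ N, (-g t0) * f t0) := by
        rw [hDdef]
        rw [Finset.sum_congr rfl (fun t1 (_ : t1 ∈ S) => Finset.sum_congr rfl
          (fun t0 (_ : t0 ∈ N) => (by ring :
            g t1 * -g t0 * (f t1 - f t0)
              = (-g t0) * (g t1 * f t1) - g t1 * ((-g t0) * f t0))))]
        rw [Finset.sum_congr rfl (fun t1 (_ : t1 ∈ S) => by
          rw [Finset.sum_sub_distrib, ← Finset.sum_mul, ← Finset.mul_sum])]
        rw [Finset.sum_sub_distrib, ← Finset.mul_sum, ← Finset.sum_mul]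
      have hq : ∑ t0 ∈ N, -g t0 = p := by
        have : ∑ t0 ∈ N, -g t0 = -∑ t0 ∈ N, g t0 := by
          rw [← Finset.sum_neg_distrib]
        rw [this]; linarith [hsum_g]
      have hr : ∑ t0 ∈ N, (-g t0) * f t0 = -B := by
        rw [hBdef, ← Finset.sum_neg_distrib]
        exact Finset.sum_congr rfl fun t0 _ => by ring
      rw [hq, hr, ← hAdef, ← hpdef] at h1
      have h2 : p * A - p * (-B) = p * (A + B) := by ring
      rw [h1, h2, hsum_gf, mul_zero]
    linarith
  -- Step 2: contradiction with the limit
  have hev : ∀ᶠ k : ℕ in atTop, (d k : ℝ) / ((k : ℝ) / Real.log k) < 1 :=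
    htend.eventually_lt_const (by norm_num)
  obtain ⟨k, hk1, hk8⟩ := (hev.and (eventually_ge_atTop 8)).exists
  have hk8' : (8 : ℝ) ≤ (k : ℝ) := by exact_mod_cast hk8
  have hlog8 : (2 : ℝ) < Real.log 8 := by
    rw [Real.lt_log_iff_exp_lt (by norm_num)]
    have h1 := Real.exp_one_lt_d9
    have h2 : Real.exp 2 = Real.exp 1 * Real.exp 1 := by
      rw [← Real.exp_add]; norm_num
    nlinarith [Real.exp_pos 1]
  have hlogk : (2 : ℝ) ≤ Real.log k := by
    have := Real.log_le_log (by norm_num : (0:ℝ) < 8) hk8'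
    linarith
  have hdk : (k : ℝ) - 1 ≤ (d k : ℝ) := by
    have := hk k
    have : (k : ℝ) ≤ (d k : ℝ) + 1 := by exact_mod_cast this
    linarith
  have hkpos : (0 : ℝ) < (k : ℝ) := by linarith
  have hratio : (1 : ℝ) ≤ (d k : ℝ) / ((k : ℝ) / Real.log k) := by
    rw [div_div_eq_mul_div, le_div_iff₀ hkpos, one_mul]
    nlinarith
  linarith
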